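/- For any family S of nonempty finite sets of positive integers, a heap size x is a P-position of the comply-set game defined by S if and only if x is an N-position of the comply-number game defined by S. -/
import Mathlib


/-- P-positions of the comply-number game defined by a family `S` of finite sets of
positive integers: `x` is P iff for every applicable `s ∈ S` some option `x - i` is N. -/
def complyNumP (S : Set (Finset ℕ)) : ℕ → Prop
  | x => ∀ s, s ∈ S → (∀ i ∈ s, i ≤ x) →
      ∃ i, ∃ _ : i ∈ s, ∃ _ : 0 < i, ∃ _ : i ≤ x, ¬ complyNumP S (x - i)
termination_by x => x
decreasing_by all_goals omega

/-- P-positions of the comply-set game defined by `S`: `x` is P iff there is an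
applicable `s ∈ S` all of whose options `x - i` are N (equivalently, non-P). -/
def complySetP (S : Set (Finset ℕ)) : ℕ → Prop
  | x => ∃ s, ∃ _ : s ∈ S, (∀ i ∈ s, i ≤ x) ∧
      ∀ i, i ∈ s → ∀ _ : 0 < i, ∀ _ : i ≤ x, ¬ complySetP S (x - i)
termination_by x => x
decreasing_by all_goals omega

/-- For any family of nonempty finite sets of positive integers, a heap size is a
P-position of the comply-set game iff it is an N-position of the comply-number game. -/
theorem complySetP_iff_not_complyNumP (S : Set (Finset ℕ))
    (hne : ∀ s ∈ S, s.Nonempty) (hpos : ∀ s ∈ S, ∀ i ∈ s, 0 < i) (x : ℕ) :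
    complySetP S x ↔ ¬ complyNumP S x := by
  induction x using Nat.strong_induction_on with
  | _ x ih =>
    rw [complySetP, complyNumP]
    constructor
    · rintro ⟨s, hs, happ, h⟩ hnum
      obtain ⟨i, hi, hipos, hile, hN⟩ := hnum s hs happ
      exact h i hi hipos hile ((ih (x - i) (by omega)).mpr hN)
    · intro hn
      push_neg at hn
      obtain ⟨s, hs, happ, hforall⟩ := hn
      refine ⟨s, hs, happ, fun i hi hipos hile hset => ?_⟩
      exact (ih (x - i) (by omega)).mp hset (hforall i hi hipos hile)
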